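/- Let (V', τ') and (V'', τ'') be two subsystem initializations of ℂ^{d_L} into ℂ^{d_P} with τ' and τ'' of full rank, and let Π' and Π'' denote the orthogonal projections onto the images of the respective ℂ^{d_L} ⊗ ℂ^{d_F} summands. Suppose that for every unit vector ψ ∈ ℂ^{d_L} there exist positive semidefinite operators τ̃'(ψ) and τ̃''(ψ) (possibly depending on ψ) such that Π' (V''(|ψ⟩⟨ψ| ⊗ τ'' ⊕ 0)V''*) Π' = V'(|ψ⟩⟨ψ| ⊗ τ̃'(ψ) ⊕ 0)V'* and Π'' (V'(|ψ⟩⟨ψ| ⊗ τ' ⊕ 0)V'*) Π'' = V''(|ψ⟩⟨ψ| ⊗ τ̃''(ψ) ⊕ 0)V''*. Then there exist positive semidefinite operators τ̃' and τ̃'', independent of the state, such that for every density operator ρ on ℂ^{d_L}: Π' (V''(ρ ⊗ τ'' ⊕ 0)V''*) Π' = V'(ρ ⊗ τ̃' ⊕ 0)V'* and Π'' (V'(ρ ⊗ τ' ⊕ 0)V'*) Π'' = V''(ρ ⊗ τ̃'' ⊕ 0)V''*; that is, the two initializations are compatible. -/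

import Mathlib

open Matrix Kronecker
open scoped ComplexOrder

noncomputable section

/-- A density operator: positive semidefinite with trace 1. -/
def IsDensity {n : Type*} [Fintype n] (ρ : Matrix n n ℂ) : Prop :=
  ρ.PosSemidef ∧ ρ.trace = 1

/-- A map between matrix spaces is CPTP if it has a Kraus representation. -/
def IsCPTP {n₁ n₂ : Type*} [Fintype n₁] [Fintype n₂] [DecidableEq n₁] [DecidableEq n₂]
    (Φ : Matrix n₁ n₁ ℂ → Matrix n₂ n₂ ℂ) : Prop :=
  ∃ (m : ℕ) (K : Fin m → Matrix n₂ n₁ ℂ),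
    (∀ A, Φ A = ∑ i, K i * A * (K i)ᴴ) ∧ (∑ i, (K i)ᴴ * K i = 1)

/-- A unitary matrix (between possibly differently indexed spaces). -/
def IsUnitaryMx {m n : Type*} [Fintype m] [Fintype n] [DecidableEq m] [DecidableEq n]
    (V : Matrix m n ℂ) : Prop :=
  Vᴴ * V = 1 ∧ V * Vᴴ = 1

/-- The map `ρ ↦ V (ρ ⊗ τ ⊕ 0) Vᴴ` of a subsystem initialization `(V, τ)`. -/
def initMap {L F R P : Type*} [Fintype L] [Fintype F] [Fintype R] [Fintype P]
    (V : Matrix P ((L × F) ⊕ R) ℂ) (τ : Matrix F F ℂ) (ρ : Matrix L L ℂ) :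
    Matrix P P ℂ :=
  V * (Matrix.fromBlocks (ρ ⊗ₖ τ) 0 0 0 : Matrix ((L × F) ⊕ R) ((L × F) ⊕ R) ℂ) * Vᴴ

/-- The orthogonal projection `Π_V = V (1 ⊗ 1 ⊕ 0) Vᴴ` onto the image of the
tensor summand. -/
def projOf {L F R P : Type*} [Fintype L] [Fintype F] [Fintype R] [Fintype P]
    [DecidableEq L] [DecidableEq F]
    (V : Matrix P ((L × F) ⊕ R) ℂ) : Matrix P P ℂ :=
  V * (Matrix.fromBlocks 1 0 0 0 : Matrix ((L × F) ⊕ R) ((L × F) ⊕ R) ℂ) * Vᴴ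

namespace Stmt9Aux
set_option linter.unusedSectionVars false
set_option maxHeartbeats 1000000

variable {L F : Type*} [Fintype L] [DecidableEq L] [Fintype F] [DecidableEq F]

def EM (i j : L) : Matrix L L ℂ := Matrix.vecMulVec (Pi.single i 1) (Pi.single j 1)

lemma EM_apply (i j p q : L) :
    EM i j p q = (if p = i then (1:ℂ) else 0) * (if q = j then 1 else 0) := by
  simp [EM, Matrix.vecMulVec_apply, Pi.single_apply]

lemma star_single (i : L) : star ((Pi.single i 1 : L → ℂ)) = (Pi.single i 1 : L → ℂ) := by
  ext k
  simp only [Pi.star_apply, Pi.single_apply]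
  split <;> simp

lemma hc : ((Real.sqrt 2 : ℂ))⁻¹ * star (((Real.sqrt 2 : ℂ))⁻¹) = (2:ℂ)⁻¹ := by
  rw [star_inv₀, Complex.star_def, Complex.conj_ofReal, ← mul_inv, ← Complex.ofReal_mul,
    Real.mul_self_sqrt (by norm_num)]
  norm_num

lemma unit_psi (i j : L) (hij : i ≠ j) (c z : ℂ) (hcc : c * star c = (2:ℂ)⁻¹)
    (hz : z * star z = 1) :
    star (c • ((Pi.single i 1 : L → ℂ) + z • (Pi.single j 1 : L → ℂ))) ⬝ᵥ
      (c • ((Pi.single i 1 : L → ℂ) + z • (Pi.single j 1 : L → ℂ))) = 1 := by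
  rw [star_smul, star_add, star_smul, star_single, star_single]
  simp only [smul_dotProduct, dotProduct_smul, add_dotProduct, dotProduct_add,
    single_dotProduct, Pi.add_apply, Pi.smul_apply, Pi.single_apply, smul_eq_mul,
    eq_self_iff_true, if_true, if_neg hij, if_neg hij.symm, mul_zero, zero_mul, mul_one,
    one_mul, add_zero, zero_add]
  linear_combination (1 + z * star z) * hcc + (2:ℂ)⁻¹ * hz

lemma decomp (i j : L) (hij : i ≠ j) (c z : ℂ) (hcc : c * star c = (2:ℂ)⁻¹)
    (hz : z * star z = 1) :
    Matrix.vecMulVec (c • ((Pi.single i 1 : L → ℂ) + z • (Pi.single j 1 : L → ℂ)))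
      (star (c • ((Pi.single i 1 : L → ℂ) + z • (Pi.single j 1 : L → ℂ))))
    = (2:ℂ)⁻¹ • (EM i i + star z • EM i j + z • EM j i + EM j j) := by
  have h1 : Matrix.vecMulVec (c • ((Pi.single i 1 : L → ℂ) + z • (Pi.single j 1 : L → ℂ)))
      (star (c • ((Pi.single i 1 : L → ℂ) + z • (Pi.single j 1 : L → ℂ))))
      = (c * star c) • (EM i i + star z • EM i j + z • EM j i + (z * star z) • EM j j) := by
    rw [star_smul, star_add, star_smul, star_single, star_single]
    ext p q
    simp only [Matrix.vecMulVec_apply, Pi.smul_apply, Pi.add_apply, Pi.single_apply,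
      smul_eq_mul, Matrix.smul_apply, Matrix.add_apply, EM_apply]
    ring
  rw [h1, hz, hcc, one_smul]

lemma key [Nonempty L]
    (M : Matrix L L ℂ → Matrix (L × F) (L × F) ℂ)
    (hadd : ∀ a b, M (a + b) = M a + M b)
    (hsmul : ∀ (r : ℂ) a, M (r • a) = r • M a)
    (h : ∀ ψ : L → ℂ, star ψ ⬝ᵥ ψ = 1 → ∃ t : Matrix F F ℂ, t.PosSemidef ∧
        M (Matrix.vecMulVec ψ (star ψ)) = Matrix.vecMulVec ψ (star ψ) ⊗ₖ t) :
    ∃ t : Matrix F F ℂ, t.PosSemidef ∧ ∀ ρ, M ρ = ρ ⊗ₖ t := by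
  have hdiag : ∀ i : L, ∃ t : Matrix F F ℂ, t.PosSemidef ∧ M (EM i i) = EM i i ⊗ₖ t := by
    intro i
    have hunit : star ((Pi.single i 1 : L → ℂ)) ⬝ᵥ (Pi.single i 1 : L → ℂ) = 1 := by
      rw [star_single, single_dotProduct]
      simp [Pi.single_apply]
    obtain ⟨t, ht, hMt⟩ := h _ hunit
    rw [star_single] at hMt
    exact ⟨t, ht, hMt⟩
  choose t tPSD hMt using hdiag
  obtain ⟨c, hcc⟩ : ∃ c : ℂ, c * star c = (2:ℂ)⁻¹ := ⟨(Real.sqrt 2 : ℂ)⁻¹, hc⟩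
  set i₀ := Classical.arbitrary L with hi₀
  have main : ∀ i j : L, i ≠ j → M (EM i j) = EM i j ⊗ₖ t i ∧ t j = t i := by
    intro i j hij
    have hzs : ∀ z : ℂ, z * star z = 1 → ∃ s : Matrix F F ℂ,
        EM i i ⊗ₖ t i + star z • M (EM i j) + z • M (EM j i) + EM j j ⊗ₖ t j
          = (EM i i + star z • EM i j + z • EM j i + EM j j) ⊗ₖ s := by
      intro z hz
      obtain ⟨s, _, hs⟩ := h _ (unit_psi i j hij c z hcc hz)
      rw [decomp i j hij c z hcc hz] at hs
      refine ⟨s, ?_⟩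
      have h2 : (EM i i + star z • EM i j + z • EM j i + EM j j : Matrix L L ℂ)
          = (2:ℂ) • ((2:ℂ)⁻¹ • (EM i i + star z • EM i j + z • EM j i + EM j j)) := by
        rw [smul_smul]; norm_num
      have e3 : M (EM i i + star z • EM i j + z • EM j i + EM j j)
          = (EM i i + star z • EM i j + z • EM j i + EM j j) ⊗ₖ s := by
        rw [h2, hsmul, hs]
        simp only [Matrix.smul_kronecker]
      rw [hadd, hadd, hadd, hsmul, hsmul, hMt i, hMt j] at e3
      exact e3
    obtain ⟨s1, hs1⟩ := hzs 1 (by simp)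
    obtain ⟨s2, hs2⟩ := hzs Complex.I (by simp [Complex.star_def, Complex.conj_I])
    obtain ⟨s3, hs3⟩ := hzs (-1) (by simp)
    rw [show star (1:ℂ) = 1 from star_one ℂ] at hs1
    simp only [one_smul] at hs1
    rw [show star (Complex.I) = -Complex.I by simp [Complex.star_def, Complex.conj_I]] at hs2
    rw [show star (-1:ℂ) = -1 by simp] at hs3
    -- step: t j = t i
    have htji : t j = t i := by
      ext a b
      have e1ii := congrFun (congrFun hs1 (i,a)) (i,b)
      have e3ii := congrFun (congrFun hs3 (i,a)) (i,b)
      have e1jj := congrFun (congrFun hs1 (j,a)) (j,b)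
      have e3jj := congrFun (congrFun hs3 (j,a)) (j,b)
      have e1ij := congrFun (congrFun hs1 (i,a)) (j,b)
      have e3ij := congrFun (congrFun hs3 (i,a)) (j,b)
      simp only [Matrix.add_apply, Matrix.smul_apply, Matrix.kroneckerMap_apply, EM_apply,
        smul_eq_mul, eq_self_iff_true, if_true, if_neg hij, if_neg hij.symm, one_mul,
        zero_mul, mul_zero, mul_one, add_zero, zero_add, neg_mul, neg_smul, neg_neg,
        Matrix.neg_apply] at e1ii e3ii e1jj e3jj e1ij e3ij
      linear_combination (e1jj + e3jj - e1ii - e3ii) / 2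
    have hs1ti : s1 = t i := by
      ext a b
      have e1ii := congrFun (congrFun hs1 (i,a)) (i,b)
      have e3ii := congrFun (congrFun hs3 (i,a)) (i,b)
      have e1ij := congrFun (congrFun hs1 (i,a)) (j,b)
      have e3ij := congrFun (congrFun hs3 (i,a)) (j,b)
      simp only [Matrix.add_apply, Matrix.smul_apply, Matrix.kroneckerMap_apply, EM_apply,
        smul_eq_mul, eq_self_iff_true, if_true, if_neg hij, if_neg hij.symm, one_mul,
        zero_mul, mul_zero, mul_one, add_zero, zero_add, neg_mul, neg_smul, neg_neg,
        Matrix.neg_apply] at e1ii e3ii e1ij e3ij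
      linear_combination (-e1ii - e3ii - e1ij - e3ij) / 2
    obtain ⟨s4, hs4⟩ := hzs (-Complex.I) (by simp [Complex.star_def, Complex.conj_I])
    rw [show star (-Complex.I) = Complex.I by simp [Complex.star_def, Complex.conj_I]] at hs4
    have hs2ti : s2 = t i := by
      ext a b
      have e2ii := congrFun (congrFun hs2 (i,a)) (i,b)
      have e4ii := congrFun (congrFun hs4 (i,a)) (i,b)
      have e2ij := congrFun (congrFun hs2 (i,a)) (j,b)
      have e4ij := congrFun (congrFun hs4 (i,a)) (j,b)
      simp only [Matrix.add_apply, Matrix.smul_apply, Matrix.kroneckerMap_apply, EM_apply,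
        smul_eq_mul, eq_self_iff_true, if_true, if_neg hij, if_neg hij.symm, one_mul,
        zero_mul, mul_zero, mul_one, add_zero, zero_add, neg_mul, neg_smul, neg_neg,
        Matrix.neg_apply] at e2ii e4ii e2ij e4ij
      linear_combination (-e2ii - e4ii - Complex.I * e2ij - Complex.I * e4ij) / 2
        + (s2 a b - s4 a b) / 2 * Complex.I_sq
    rw [htji, hs1ti] at hs1
    rw [htji, hs2ti] at hs2
    have h1' : EM i i ⊗ₖ t i + M (EM i j) + M (EM j i) + EM j j ⊗ₖ t i
        = EM i i ⊗ₖ t i + EM i j ⊗ₖ t i + EM j i ⊗ₖ t i + EM j j ⊗ₖ t i := by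
      rw [hs1]; simp only [Matrix.add_kronecker]
    have h2' : EM i i ⊗ₖ t i + (-Complex.I) • M (EM i j) + Complex.I • M (EM j i)
          + EM j j ⊗ₖ t i
        = EM i i ⊗ₖ t i + (-Complex.I) • (EM i j ⊗ₖ t i) + Complex.I • (EM j i ⊗ₖ t i)
          + EM j j ⊗ₖ t i := by
      rw [hs2]; simp only [Matrix.add_kronecker, Matrix.smul_kronecker]
    have hfin : (2:ℂ) • M (EM i j) = (2:ℂ) • (EM i j ⊗ₖ t i) := by
      calc (2:ℂ) • M (EM i j)
          = ((EM i i ⊗ₖ t i + M (EM i j) + M (EM j i) + EM j j ⊗ₖ t i)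
              + Complex.I • (EM i i ⊗ₖ t i + (-Complex.I) • M (EM i j)
                + Complex.I • M (EM j i) + EM j j ⊗ₖ t i))
            - (1 + Complex.I) • (EM i i ⊗ₖ t i + EM j j ⊗ₖ t i) := by
            match_scalars <;> (simp [Complex.ext_iff]; try norm_num)
        _ = ((EM i i ⊗ₖ t i + EM i j ⊗ₖ t i + EM j i ⊗ₖ t i + EM j j ⊗ₖ t i)
              + Complex.I • (EM i i ⊗ₖ t i + (-Complex.I) • (EM i j ⊗ₖ t i)
                + Complex.I • (EM j i ⊗ₖ t i) + EM j j ⊗ₖ t i))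
            - (1 + Complex.I) • (EM i i ⊗ₖ t i + EM j j ⊗ₖ t i) := by rw [h1', h2']
        _ = (2:ℂ) • (EM i j ⊗ₖ t i) := by
            match_scalars <;> (simp [Complex.ext_iff]; try norm_num)
    exact ⟨smul_right_injective _ (two_ne_zero) hfin, htji⟩
  have hti : ∀ i : L, t i = t i₀ := by
    intro i
    rcases eq_or_ne i i₀ with rfl | hne
    · rfl
    · exact (main i₀ i hne.symm).2
  have hEM : ∀ i j : L, M (EM i j) = EM i j ⊗ₖ t i₀ := by
    intro i j
    rcases eq_or_ne i j with rfl | hne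
    · rw [hMt i, hti i]
    · rw [(main i j hne).1, hti i]
  refine ⟨t i₀, tPSD i₀, ?_⟩
  intro ρ
  let Mlin : Matrix L L ℂ →ₗ[ℂ] Matrix (L × F) (L × F) ℂ :=
    { toFun := M, map_add' := hadd, map_smul' := hsmul }
  have hρ : ρ = ∑ i : L, ∑ j : L, ρ i j • EM i j := by
    ext p q
    simp [Matrix.sum_apply, EM_apply, mul_ite, mul_one, mul_zero, Finset.sum_ite_eq]
  calc M ρ = Mlin (∑ i : L, ∑ j : L, ρ i j • EM i j) := by rw [← hρ]; rfl
    _ = ∑ i : L, ∑ j : L, ρ i j • Mlin (EM i j) := by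
        simp only [map_sum, _root_.map_smul]
    _ = ∑ i : L, ∑ j : L, ρ i j • (EM i j ⊗ₖ t i₀) := by
        simp only [Mlin, LinearMap.coe_mk, AddHom.coe_mk, hEM]
    _ = (∑ i : L, ∑ j : L, ρ i j • EM i j) ⊗ₖ t i₀ := by
        ext ⟨p,a⟩ ⟨q,b⟩
        simp only [Matrix.sum_apply, Matrix.smul_apply, Matrix.kroneckerMap_apply,
          smul_eq_mul, Finset.sum_mul, mul_assoc]
    _ = ρ ⊗ₖ t i₀ := by rw [← hρ]


lemma mul_unitary_cancel {P S : Type*} [Fintype P] [Fintype S] [DecidableEq S]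
    (V : Matrix P S ℂ) (hV : Vᴴ * V = 1) {A B : Matrix S S ℂ} :
    V * A * Vᴴ = V * B * Vᴴ ↔ A = B := by
  constructor
  · intro hAB
    calc A = (Vᴴ * V) * A * (Vᴴ * V) := by rw [hV, one_mul, mul_one]
    _ = Vᴴ * (V * A * Vᴴ) * V := by simp only [Matrix.mul_assoc]
    _ = Vᴴ * (V * B * Vᴴ) * V := by rw [hAB]
    _ = (Vᴴ * V) * B * (Vᴴ * V) := by simp only [Matrix.mul_assoc]
    _ = B := by rw [hV, one_mul, mul_one]
  · intro h; rw [h]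

lemma P0_sandwich {S R : Type*} [Fintype S] [Fintype R] [DecidableEq S]
    (Y : Matrix (S ⊕ R) (S ⊕ R) ℂ) :
    (Matrix.fromBlocks 1 0 0 0 : Matrix (S ⊕ R) (S ⊕ R) ℂ) * Y * Matrix.fromBlocks 1 0 0 0
      = Matrix.fromBlocks Y.toBlocks₁₁ 0 0 0 := by
  nth_rewrite 1 [← Matrix.fromBlocks_toBlocks Y]
  rw [Matrix.fromBlocks_multiply, Matrix.fromBlocks_multiply]
  simp

lemma init_eq_iff {L F R P : Type*} [Fintype L] [Fintype F] [Fintype R] [Fintype P]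
    [DecidableEq L] [DecidableEq F] [DecidableEq R]
    (V : Matrix P ((L × F) ⊕ R) ℂ) (hV : Vᴴ * V = 1)
    (X : Matrix P P ℂ) (ρ : Matrix L L ℂ) (t : Matrix F F ℂ) :
    projOf V * X * projOf V = initMap V t ρ ↔ (Vᴴ * X * V).toBlocks₁₁ = ρ ⊗ₖ t := by
  have hL : projOf V * X * projOf V
      = V * (Matrix.fromBlocks (Vᴴ * X * V).toBlocks₁₁ 0 0 0 : Matrix ((L × F) ⊕ R) ((L × F) ⊕ R) ℂ) * Vᴴ := by
    rw [← P0_sandwich]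
    unfold projOf
    simp only [Matrix.mul_assoc]
  rw [hL, show initMap V t ρ = V * (Matrix.fromBlocks (ρ ⊗ₖ t) 0 0 0 : Matrix ((L × F) ⊕ R) ((L × F) ⊕ R) ℂ) * Vᴴ from rfl,
    mul_unitary_cancel V hV]
  constructor
  · intro hEq
    exact (Matrix.fromBlocks_inj.mp hEq).1
  · intro hEq; rw [hEq]

lemma initMap_add {L F R P : Type*} [Fintype L] [Fintype F] [Fintype R] [Fintype P]
    (V : Matrix P ((L × F) ⊕ R) ℂ) (τ : Matrix F F ℂ) (a b : Matrix L L ℂ) :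
    initMap V τ (a + b) = initMap V τ a + initMap V τ b := by
  unfold initMap
  rw [Matrix.add_kronecker,
    show (Matrix.fromBlocks (a ⊗ₖ τ + b ⊗ₖ τ) 0 0 0 : Matrix ((L×F)⊕R) ((L×F)⊕R) ℂ)
      = Matrix.fromBlocks (a ⊗ₖ τ) 0 0 0 + Matrix.fromBlocks (b ⊗ₖ τ) 0 0 0 by
        rw [Matrix.fromBlocks_add]; norm_num,
    Matrix.mul_add, Matrix.add_mul]

lemma initMap_smul {L F R P : Type*} [Fintype L] [Fintype F] [Fintype R] [Fintype P]
    (V : Matrix P ((L × F) ⊕ R) ℂ) (τ : Matrix F F ℂ) (r : ℂ) (a : Matrix L L ℂ) :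
    initMap V τ (r • a) = r • initMap V τ a := by
  unfold initMap
  rw [Matrix.smul_kronecker,
    show (Matrix.fromBlocks (r • (a ⊗ₖ τ)) 0 0 0 : Matrix ((L×F)⊕R) ((L×F)⊕R) ℂ)
      = r • Matrix.fromBlocks (a ⊗ₖ τ) 0 0 0 by rw [Matrix.fromBlocks_smul]; norm_num,
    Matrix.mul_smul, Matrix.smul_mul]

lemma toBlocks₁₁_add {S R S' R' : Type*} (A B : Matrix (S ⊕ R) (S' ⊕ R') ℂ) :
    (A + B).toBlocks₁₁ = A.toBlocks₁₁ + B.toBlocks₁₁ := by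
  ext p q; simp [Matrix.toBlocks₁₁]

lemma toBlocks₁₁_smul {S R S' R' : Type*} (r : ℂ) (A : Matrix (S ⊕ R) (S' ⊕ R') ℂ) :
    (r • A).toBlocks₁₁ = r • A.toBlocks₁₁ := by
  ext p q; simp [Matrix.toBlocks₁₁]

end Stmt9Aux

/-- if two full-rank subsystem initializations are compatible on
every pure state (with possibly state-dependent co-factors), then they are
compatible with state-independent co-factors, on all density operators. -/
theorem stmt9 (dL dP dF' dR' dF'' dR'' : ℕ)
    (V' : Matrix (Fin dP) ((Fin dL × Fin dF') ⊕ Fin dR') ℂ)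
    (hV' : IsUnitaryMx V')
    (τ' : Matrix (Fin dF') (Fin dF') ℂ)
    (hτ' : τ'.PosDef ∧ τ'.trace = 1)
    (V'' : Matrix (Fin dP) ((Fin dL × Fin dF'') ⊕ Fin dR'') ℂ)
    (hV'' : IsUnitaryMx V'')
    (τ'' : Matrix (Fin dF'') (Fin dF'') ℂ)
    (hτ'' : τ''.PosDef ∧ τ''.trace = 1)
    (hpure : ∀ ψ : Fin dL → ℂ, star ψ ⬝ᵥ ψ = 1 →
      ∃ (t' : Matrix (Fin dF') (Fin dF') ℂ) (t'' : Matrix (Fin dF'') (Fin dF'') ℂ),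
        t'.PosSemidef ∧ t''.PosSemidef ∧
        projOf V' * initMap V'' τ'' (Matrix.vecMulVec ψ (star ψ)) * projOf V'
          = initMap V' t' (Matrix.vecMulVec ψ (star ψ)) ∧
        projOf V'' * initMap V' τ' (Matrix.vecMulVec ψ (star ψ)) * projOf V''
          = initMap V'' t'' (Matrix.vecMulVec ψ (star ψ))) :
    ∃ (t' : Matrix (Fin dF') (Fin dF') ℂ) (t'' : Matrix (Fin dF'') (Fin dF'') ℂ),
      t'.PosSemidef ∧ t''.PosSemidef ∧
      ∀ ρ : Matrix (Fin dL) (Fin dL) ℂ, IsDensity ρ →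
        projOf V' * initMap V'' τ'' ρ * projOf V' = initMap V' t' ρ ∧
        projOf V'' * initMap V' τ' ρ * projOf V'' = initMap V'' t'' ρ := by
  classical
  rcases Nat.eq_zero_or_pos dL with hd | hd
  · refine ⟨0, 0, Matrix.PosSemidef.zero, Matrix.PosSemidef.zero, ?_⟩
    intro ρ hρ
    exfalso
    have h1 := hρ.2
    subst hd
    simp [Matrix.trace] at h1
  · haveI : Nonempty (Fin dL) := Fin.pos_iff_nonempty.mp hd
    obtain ⟨t1, ht1, hM1⟩ := Stmt9Aux.key
      (fun ρ => (V'ᴴ * initMap V'' τ'' ρ * V').toBlocks₁₁)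
      (fun a b => by
        simp only [Stmt9Aux.initMap_add, Matrix.mul_add, Matrix.add_mul,
          Stmt9Aux.toBlocks₁₁_add])
      (fun r a => by
        simp only [Stmt9Aux.initMap_smul, Matrix.mul_smul, Matrix.smul_mul,
          Stmt9Aux.toBlocks₁₁_smul])
      (fun ψ hψ => by
        obtain ⟨ta, tb, hta, htb, e1, e2⟩ := hpure ψ hψ
        exact ⟨ta, hta, (Stmt9Aux.init_eq_iff V' hV'.1 _ _ _).mp e1⟩)
    obtain ⟨t2, ht2, hM2⟩ := Stmt9Aux.key
      (fun ρ => (V''ᴴ * initMap V' τ' ρ * V'').toBlocks₁₁)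
      (fun a b => by
        simp only [Stmt9Aux.initMap_add, Matrix.mul_add, Matrix.add_mul,
          Stmt9Aux.toBlocks₁₁_add])
      (fun r a => by
        simp only [Stmt9Aux.initMap_smul, Matrix.mul_smul, Matrix.smul_mul,
          Stmt9Aux.toBlocks₁₁_smul])
      (fun ψ hψ => by
        obtain ⟨ta, tb, hta, htb, e1, e2⟩ := hpure ψ hψ
        exact ⟨tb, htb, (Stmt9Aux.init_eq_iff V'' hV''.1 _ _ _).mp e2⟩)
    exact ⟨t1, t2, ht1, ht2, fun ρ _ =>
      ⟨(Stmt9Aux.init_eq_iff V' hV'.1 _ _ _).mpr (hM1 ρ),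
       (Stmt9Aux.init_eq_iff V'' hV''.1 _ _ _).mpr (hM2 ρ)⟩⟩
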